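/- The modular vector field of π₁ is Hamiltonian: D(π₁) equals the Hamiltonian vector field of f = ln(a₁a₂⋯a_{N-1}) with respect to π₁, on the open set where all a_i > 0. -/

import Mathlib

/-- Partial derivative of a function on `ι → ℝ` in the `i`-th coordinate direction. -/
noncomputable def pd {ι : Type*} [Fintype ι] [DecidableEq ι]
    (i : ι) (f : (ι → ℝ) → ℝ) (x : ι → ℝ) : ℝ :=
  fderiv ℝ f x (Pi.single i 1)

/-- The linear Toda bracket π₁ on ℝ^{2N-1}; here `M = N - 1`, the `a`-coordinates
are indexed by `Fin M` (`Sum.inl`) and the `b`-coordinates by `Fin (M+1)` (`Sum.inr`).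
Nonzero coordinate brackets: {a_i, b_i} = -a_i, {a_i, b_{i+1}} = a_i. -/
noncomputable def pi1 (M : ℕ) :
    (Fin M ⊕ Fin (M+1)) → (Fin M ⊕ Fin (M+1)) → ((Fin M ⊕ Fin (M+1)) → ℝ) → ℝ
  | .inl i, .inr j => fun x =>
      if j = i.castSucc then -(x (.inl i)) else if j = i.succ then x (.inl i) else 0
  | .inr j, .inl i => fun x =>
      if j = i.castSucc then x (.inl i) else if j = i.succ then -(x (.inl i)) else 0
  | .inl _, .inl _ => fun _ => 0
  | .inr _, .inr _ => fun _ => 0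

/-- The modular vector field (divergence) of a 2-tensor `π` with respect to
the standard volume: D(π)_j = Σ_i ∂π_{ji}/∂x_i. -/
noncomputable def modvf {ι : Type*} [Fintype ι] [DecidableEq ι]
    (π : ι → ι → (ι → ℝ) → ℝ) (x : ι → ℝ) (j : ι) : ℝ :=
  ∑ i, pd i (fun y => π j i y) x

lemma pd_coord {ι : Type*} [Fintype ι] [DecidableEq ι] (i c : ι) (x : ι → ℝ) :
    pd i (fun y => y c) x = (Pi.single i 1 : ι → ℝ) c := by
  have h : (fun y : ι → ℝ => y c) = (ContinuousLinearMap.proj c : (ι → ℝ) →L[ℝ] ℝ) := rfl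
  rw [pd, h, ContinuousLinearMap.fderiv, ContinuousLinearMap.proj_apply]

lemma pd_neg_coord {ι : Type*} [Fintype ι] [DecidableEq ι] (i c : ι) (x : ι → ℝ) :
    pd i (fun y => -(y c)) x = -((Pi.single i 1 : ι → ℝ) c) := by
  have h : (fun y : ι → ℝ => -(y c)) = (-(ContinuousLinearMap.proj c) : (ι → ℝ) →L[ℝ] ℝ) := rfl
  rw [pd, h, ContinuousLinearMap.fderiv]
  simp

lemma pd_const {ι : Type*} [Fintype ι] [DecidableEq ι] (i : ι) (x : ι → ℝ) (c : ℝ) :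
    pd i (fun _ => c) x = 0 := by
  simp [pd]

lemma pd_logprod (M : ℕ) (x : (Fin M ⊕ Fin (M+1)) → ℝ)
    (hx : ∀ i : Fin M, 0 < x (.inl i)) (i : Fin M ⊕ Fin (M+1)) :
    pd i (fun y => Real.log (∏ k : Fin M, y (.inl k))) x
      = Sum.elim (fun k => (x (.inl k))⁻¹) (fun _ => 0) i := by
  have hprod : (0:ℝ) < ∏ k : Fin M, x (.inl k) :=
    Finset.prod_pos fun k _ => hx k
  have hg : HasFDerivAt (fun y : (Fin M ⊕ Fin (M+1)) → ℝ => ∏ k : Fin M, y (.inl k))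
      (∑ k : Fin M, (∏ j ∈ Finset.univ.erase k, x (.inl j)) •
        (ContinuousLinearMap.proj (R := ℝ) (φ := fun _ : Fin M ⊕ Fin (M+1) => ℝ) (.inl k))) x :=
    HasFDerivAt.finset_prod fun k _ =>
      (ContinuousLinearMap.proj (R := ℝ)
        (φ := fun _ : Fin M ⊕ Fin (M+1) => ℝ) (.inl k)).hasFDerivAt
  have hlog := hg.log hprod.ne'
  rw [pd, hlog.fderiv]
  simp only [ContinuousLinearMap.smul_apply, ContinuousLinearMap.coe_sum',
    Finset.sum_apply, ContinuousLinearMap.proj_apply, smul_eq_mul]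
  cases i with
  | inl k =>
    rw [Finset.sum_eq_single k]
    · simp only [Pi.single_eq_same, mul_one, Sum.elim_inl]
      have herase : (0:ℝ) < ∏ j ∈ Finset.univ.erase k, x (.inl j) :=
        Finset.prod_pos fun j _ => hx j
      rw [← Finset.mul_prod_erase Finset.univ _ (Finset.mem_univ k), mul_inv, mul_assoc,
        inv_mul_cancel₀ herase.ne', mul_one]
    · intro b _ hb
      rw [Pi.single_eq_of_ne (by simpa using hb), mul_zero]
    · simp
  | inr k =>
    simp [Pi.single_eq_of_ne]

/-- The modular vector field of π₁ is Hamiltonian: on the open set where all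
a_i > 0, D(π₁) equals the Hamiltonian vector field (X_f)_j = Σ_i (π₁)_{ji} ∂f/∂x_i
of f = ln(a₁ a₂ ⋯ a_{N-1}) with respect to π₁. -/
theorem modular_pi1_hamiltonian (M : ℕ) (x : (Fin M ⊕ Fin (M+1)) → ℝ)
    (hx : ∀ i : Fin M, 0 < x (.inl i)) (j : Fin M ⊕ Fin (M+1)) :
    modvf (pi1 M) x j
      = ∑ i, pi1 M j i x * pd i (fun y => Real.log (∏ k : Fin M, y (.inl k))) x := by
  rw [modvf]
  refine Finset.sum_congr rfl fun i _ => ?_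
  rw [pd_logprod M x hx i]
  cases j with
  | inl j0 =>
    cases i with
    | inl k => simp [pi1, pd_const]
    | inr k =>
      have h0 : pd (Sum.inr k : Fin M ⊕ Fin (M+1)) (fun y => pi1 M (.inl j0) (.inr k) y) x = 0 := by
        by_cases h1 : k = j0.castSucc
        · have hfun : (fun y : (Fin M ⊕ Fin (M+1)) → ℝ => pi1 M (.inl j0) (.inr k) y)
              = fun y => -(y (Sum.inl j0)) := by
            funext y; simp [pi1, h1]
          rw [hfun, pd_neg_coord, Pi.single_eq_of_ne (by simp)]
          simp
        · by_cases h2 : k = j0.succ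
          · have hfun : (fun y : (Fin M ⊕ Fin (M+1)) → ℝ => pi1 M (.inl j0) (.inr k) y)
                = fun y => y (Sum.inl j0) := by
              funext y; simp [pi1, h1, h2, (Fin.castSucc_lt_succ (i := j0)).ne']
            rw [hfun, pd_coord, Pi.single_eq_of_ne (by simp)]
          · have hfun : (fun y : (Fin M ⊕ Fin (M+1)) → ℝ => pi1 M (.inl j0) (.inr k) y)
                = fun _ => (0:ℝ) := by
              funext y; simp [pi1, h1, h2]
            rw [hfun, pd_const]
      rw [h0]
      simp
  | inr j0 =>
    cases i with
    | inr k => simp [pi1, pd_const]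
    | inl k =>
      have hne := (hx k).ne'
      by_cases h1 : j0 = k.castSucc
      · have hfun : (fun y : (Fin M ⊕ Fin (M+1)) → ℝ => pi1 M (.inr j0) (.inl k) y)
            = fun y => y (Sum.inl k) := by
          funext y; simp [pi1, h1]
        rw [hfun, pd_coord, Pi.single_eq_same]
        simp [pi1, h1, mul_inv_cancel₀ hne]
      · by_cases h2 : j0 = k.succ
        · have hfun : (fun y : (Fin M ⊕ Fin (M+1)) → ℝ => pi1 M (.inr j0) (.inl k) y)
              = fun y => -(y (Sum.inl k)) := by
            funext y; simp [pi1, h1, h2, (Fin.castSucc_lt_succ (i := k)).ne']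
          rw [hfun, pd_neg_coord, Pi.single_eq_same]
          simp [pi1, h1, h2, (Fin.castSucc_lt_succ (i := k)).ne', mul_inv_cancel₀ hne]
        · have hfun : (fun y : (Fin M ⊕ Fin (M+1)) → ℝ => pi1 M (.inr j0) (.inl k) y)
              = fun _ => (0:ℝ) := by
            funext y; simp [pi1, h1, h2]
          rw [hfun, pd_const]
          simp [pi1, h1, h2]
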